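/- Let V, W be TROs and I₁, …, I_n closed ideals of V whose sum I₁ + ⋯ + I_n is closed. Then (I₁ + ⋯ + I_n) ⊗ʰ W = (I₁ ⊗ʰ W) + ⋯ + (I_n ⊗ʰ W) inside V ⊗ʰ W. -/

import Mathlib

/-!
Statement 0: In a TRO `V ⊆ B(H,K)`, the closed linear span of products
`I₁ I₂* I₃ ⋯ I_{2n+1}` of closed ideals equals their intersection.
-/

open ContinuousLinearMap

variable {H K : Type*} [NormedAddCommGroup H] [InnerProductSpace ℂ H] [CompleteSpace H]
  [NormedAddCommGroup K] [InnerProductSpace ℂ K] [CompleteSpace K]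

/-- The ternary product `x y* z` of operators in `B(H, K)`. -/
noncomputable def tp (x y z : H →L[ℂ] K) : H →L[ℂ] K :=
  (x.comp (ContinuousLinearMap.adjoint y)).comp z

/-- A TRO: a norm-closed subspace of `B(H,K)` closed under the ternary product. -/
def IsTRO (V : Submodule ℂ (H →L[ℂ] K)) : Prop :=
  IsClosed (V : Set (H →L[ℂ] K)) ∧ ∀ x ∈ V, ∀ y ∈ V, ∀ z ∈ V, tp x y z ∈ V

/-- A closed ideal of the TRO `V`: a closed subspace `I ⊆ V` with
`I V* V + V V* I ⊆ I`. -/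
def IsTROIdeal (V I : Submodule ℂ (H →L[ℂ] K)) : Prop :=
  I ≤ V ∧ IsClosed (I : Set (H →L[ℂ] K)) ∧
    (∀ a ∈ I, ∀ y ∈ V, ∀ z ∈ V, tp a y z ∈ I) ∧
    (∀ x ∈ V, ∀ y ∈ V, ∀ a ∈ I, tp x y a ∈ I)

/-- The alternating product `a₀ a₁* a₂ a₃* ⋯ a_{2n}` of `2n+1` operators. -/
noncomputable def altProd : (n : ℕ) → (Fin (2 * n + 1) → (H →L[ℂ] K)) → (H →L[ℂ] K)
  | 0, a => a 0
  | n + 1, a =>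
      tp (altProd n fun i => a ⟨i.1, by have := i.isLt; omega⟩)
        (a ⟨2 * n + 1, by omega⟩) (a ⟨2 * n + 2, by omega⟩)

/-- The product of an odd family of ideals: the closed linear span of the
alternating products `a₁ a₂* a₃ ⋯ a_{2n+1}` with `a_k ∈ I_k`. -/
noncomputable def oddProdIdeal (n : ℕ) (J : Fin (2 * n + 1) → Submodule ℂ (H →L[ℂ] K)) :
    Submodule ℂ (H →L[ℂ] K) :=
  (Submodule.span ℂ
      {x | ∃ a : Fin (2 * n + 1) → (H →L[ℂ] K),
        (∀ i, a i ∈ J i) ∧ x = altProd n a}).topologicalClosure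

variable {H₂ K₂ : Type*} [NormedAddCommGroup H₂] [InnerProductSpace ℂ H₂] [CompleteSpace H₂]
  [NormedAddCommGroup K₂] [InnerProductSpace ℂ K₂] [CompleteSpace K₂]

variable {T : Type*} [NormedAddCommGroup T] [NormedSpace ℂ T]

section
variable (V : Submodule ℂ (H →L[ℂ] K)) (W : Submodule ℂ (H₂ →L[ℂ] K₂))

/-- `I ⊗ʰ W` inside `T = V ⊗ʰ W`: the closure of the span of elementary tensors
with first leg in the ideal `I` of `V`. -/
noncomputable def ltenW (tmul : V →ₗ[ℂ] W →ₗ[ℂ] T)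
    (I : Submodule ℂ (H →L[ℂ] K)) : Submodule ℂ T :=
  (Submodule.span ℂ
      {t | ∃ a : V, ∃ b : W, (a : H →L[ℂ] K) ∈ I ∧ t = tmul a b}).topologicalClosure

end

section AuxiliaryLemmas

open Polynomial Filter

private lemma tp_add_left (x x' y z : H →L[ℂ] K) : tp (x + x') y z = tp x y z + tp x' y z := by
  simp [tp, ContinuousLinearMap.add_comp]

private lemma tp_add_right (x y z z' : H →L[ℂ] K) : tp x y (z + z') = tp x y z + tp x y z' := by
  simp [tp, ContinuousLinearMap.comp_add]

/-- Spectral bound: any point of the real spectrum of `a : B(H)` has modulus at most `‖a‖`. -/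
private lemma spec_bound (a : H →L[ℂ] H) {t : ℝ} (ht : t ∈ spectrum ℝ a) : |t| ≤ ‖a‖ := by
  have h := spectrum.subset_closedBall_norm_mul a ht
  rw [Metric.mem_closedBall, dist_zero_right, Real.norm_eq_abs] at h
  have h1 : ‖(1 : H →L[ℂ] H)‖ ≤ 1 := by
    rw [ContinuousLinearMap.one_def]; exact ContinuousLinearMap.norm_id_le
  nlinarith [norm_nonneg a, abs_nonneg t]

/-- The elementary polynomial smallness fact used to build approximate units. -/
private lemma poly_small {R c : ℝ} (hR : 0 ≤ R) (hc1 : 0 < c) (hc2 : c * R ^ 2 < 1) {ε : ℝ}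
    (hε : 0 < ε) :
    ∃ m : ℕ, ∀ t : ℝ, |t| ≤ R → |t| * (1 - c * t ^ 2) ^ (m + m) ≤ ε := by
  have hbase : ∀ t : ℝ, |t| ≤ R → 0 ≤ 1 - c * t ^ 2 ∧ 1 - c * t ^ 2 ≤ 1 := by
    intro t ht
    have ht2 : t ^ 2 ≤ R ^ 2 := by nlinarith [sq_abs t, abs_nonneg t]
    constructor
    · nlinarith
    · nlinarith [sq_nonneg t]
  rcases le_or_gt R ε with hRe | hRe
  · refine ⟨0, fun t ht => ?_⟩
    simpa using ht.trans hRe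
  · have hq0 : 0 ≤ 1 - c * ε ^ 2 := by nlinarith
    have hq1 : 1 - c * ε ^ 2 < 1 := by nlinarith [mul_pos hc1 (pow_pos hε 2)]
    have hRpos : 0 < R := hε.trans hRe
    obtain ⟨m, hm⟩ := ((tendsto_pow_atTop_nhds_zero_of_lt_one hq0 hq1).eventually_lt_const
      (show (0 : ℝ) < ε / R by positivity)).exists
    refine ⟨m, fun t ht => ?_⟩
    rcases le_or_gt |t| ε with h | h
    · calc |t| * (1 - c * t ^ 2) ^ (m + m)
          ≤ |t| * 1 := by
            exact mul_le_mul_of_nonneg_left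
              (pow_le_one₀ (hbase t ht).1 (hbase t ht).2) (abs_nonneg t)
      _ = |t| := mul_one _
      _ ≤ ε := h
    · have het : ε ^ 2 ≤ t ^ 2 := by
        have := pow_le_pow_left₀ hε.le h.le 2
        rwa [sq_abs] at this
      have hce : c * ε ^ 2 ≤ c * t ^ 2 := mul_le_mul_of_nonneg_left het hc1.le
      have h1 : 1 - c * t ^ 2 ≤ 1 - c * ε ^ 2 := by linarith
      have hpow : (1 - c * t ^ 2) ^ (m + m) ≤ (1 - c * ε ^ 2) ^ m := by
        calc (1 - c * t ^ 2) ^ (m + m)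
            ≤ (1 - c * ε ^ 2) ^ (m + m) := pow_le_pow_left₀ (hbase t ht).1 h1 _
          _ ≤ (1 - c * ε ^ 2) ^ m := pow_le_pow_of_le_one hq0 hq1.le (Nat.le_add_left m m)
      calc |t| * (1 - c * t ^ 2) ^ (m + m)
          ≤ R * (1 - c * ε ^ 2) ^ m :=
            mul_le_mul ht hpow (pow_nonneg (hbase t ht).1 _) hR
        _ ≤ R * (ε / R) := mul_le_mul_of_nonneg_left hm.le hR
        _ = ε := by field_simp

private lemma comp_real_smul (x : H →L[ℂ] K) (r : ℝ) (b : H →L[ℂ] H) :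
    x.comp (r • b) = r • x.comp b := by
  ext v
  simp only [ContinuousLinearMap.comp_apply, ContinuousLinearMap.smul_apply,
    ← Complex.coe_smul, map_smul]

set_option maxHeartbeats 1600000 in
/-- Key analytic fact: for closed ideals `I`, `J` of a TRO and `x ∈ I`, the distance from `x`
to `I ⊓ J` is at most the distance from `x` to any element of `J` (up to `ε`). -/
private lemma exists_approx {V I J : Submodule ℂ (H →L[ℂ] K)} (hI : IsTROIdeal V I)
    (hJ : IsTROIdeal V J) {x j : H →L[ℂ] K} (hx : x ∈ I) (hj : j ∈ J) {ε : ℝ} (hε : 0 < ε) :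
    ∃ w ∈ I ⊓ J, ‖x - w‖ ≤ ‖x - j‖ + ε := by
  have hjV : j ∈ V := hJ.1 hj
  have hxV : x ∈ V := hI.1 hx
  set a : H →L[ℂ] H := (ContinuousLinearMap.adjoint j).comp j with ha_def
  have ha : IsSelfAdjoint a := by
    rw [IsSelfAdjoint, ContinuousLinearMap.star_eq_adjoint, ha_def,
      ContinuousLinearMap.adjoint_comp, ContinuousLinearMap.adjoint_adjoint]
  set c : ℝ := (‖a‖ ^ 2 + 1)⁻¹ with hc_def
  have hc1 : 0 < c := by positivity
  have hc2 : c * ‖a‖ ^ 2 < 1 := by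
    have hpos : (0 : ℝ) < ‖a‖ ^ 2 + 1 := by positivity
    rw [hc_def, inv_mul_eq_div, div_lt_one hpos]
    linarith
  obtain ⟨m, hm⟩ := poly_small (norm_nonneg a) hc1 hc2 (show (0 : ℝ) < ε ^ 2 from pow_pos hε 2)
  set Pg : ℝ[X] := (1 - Polynomial.C c * Polynomial.X ^ 2) ^ m with hPg_def
  set P : ℝ[X] := 1 - Pg with hP_def
  set g : ℝ → ℝ := fun t => (1 - c * t ^ 2) ^ m with hg_def
  have hg_eval : g = fun t => Pg.eval t := by
    funext t
    simp [hg_def, hPg_def]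
  set E : H →L[ℂ] H := Polynomial.aeval a P with hE_def
  have h1E : (1 : H →L[ℂ] H) - E = cfc g a := by
    have h1 : cfc g a = Polynomial.aeval a Pg := by
      rw [show g = Pg.eval from hg_eval]
      exact cfc_polynomial Pg a
    rw [h1, hE_def, hP_def, map_sub, map_one]
    abel
  have hsa1E : IsSelfAdjoint ((1 : H →L[ℂ] H) - E) := by
    rw [h1E]; exact cfc_predicate g a
  have hspec : ∀ t ∈ spectrum ℝ a, 0 ≤ 1 - c * t ^ 2 ∧ 1 - c * t ^ 2 ≤ 1 := by
    intro t ht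
    have h1 := spec_bound a ht
    have h2 : t ^ 2 ≤ ‖a‖ ^ 2 := by nlinarith [sq_abs t, abs_nonneg t]
    have h3 : c * t ^ 2 ≤ c * ‖a‖ ^ 2 := by nlinarith
    have h4 : 0 ≤ c * t ^ 2 := by positivity
    exact ⟨by linarith, by linarith⟩
  have hnorm1E : ‖(1 : H →L[ℂ] H) - E‖ ≤ 1 := by
    rw [h1E]
    apply norm_cfc_le zero_le_one
    intro t ht
    rw [Real.norm_eq_abs, hg_def]
    rw [abs_of_nonneg (pow_nonneg (hspec t ht).1 m)]
    exact pow_le_one₀ (hspec t ht).1 (hspec t ht).2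
  set u : H →L[ℂ] K := j.comp ((1 : H →L[ℂ] H) - E) with hu_def
  have hnormu : ‖u‖ ≤ ε := by
    have hadj : ContinuousLinearMap.adjoint ((1 : H →L[ℂ] H) - E) = (1 : H →L[ℂ] H) - E := by
      rw [← ContinuousLinearMap.star_eq_adjoint]; exact hsa1E.star_eq
    have hC : (ContinuousLinearMap.adjoint u).comp u = cfc (fun t => g t * t * g t) a := by
      rw [hu_def, ContinuousLinearMap.adjoint_comp, hadj]
      have hassoc : (((1 : H →L[ℂ] H) - E).comp (ContinuousLinearMap.adjoint j)).comp
          (j.comp ((1 : H →L[ℂ] H) - E))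
          = (((1 : H →L[ℂ] H) - E) * a) * ((1 : H →L[ℂ] H) - E) := by
        simp only [ContinuousLinearMap.mul_def, ha_def, ContinuousLinearMap.comp_assoc]
      rw [hassoc, h1E]
      have h2 : cfc (fun t : ℝ => g t * t * g t) a
          = cfc g a * cfc (fun t : ℝ => t) a * cfc g a := by
        rw [← cfc_mul g (fun t : ℝ => t) a, ← cfc_mul (fun t : ℝ => g t * t) g a]
      rw [h2, cfc_id' ℝ a]
    have hn : ‖u‖ * ‖u‖ ≤ ε ^ 2 := by
      rw [← ContinuousLinearMap.norm_adjoint_comp_self u, hC]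
      apply norm_cfc_le (by positivity)
      intro t ht
      have h1 := spec_bound a ht
      have h2 := hspec t ht
      have h3 := hm t h1
      rw [Real.norm_eq_abs]
      have habs : |(1 - c * t ^ 2) ^ m| = (1 - c * t ^ 2) ^ m :=
        abs_of_nonneg (pow_nonneg h2.1 m)
      calc |g t * t * g t| = |t| * (1 - c * t ^ 2) ^ (m + m) := by
            rw [hg_def, abs_mul, abs_mul, habs, pow_add]
            ring
        _ ≤ ε ^ 2 := h3
    nlinarith [norm_nonneg u, hε.le]
  have hpow : ∀ k : ℕ, x.comp (a ^ (k + 1)) ∈ I ⊓ J := by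
    intro k
    induction k with
    | zero =>
      have h1 : x.comp (a ^ 1) = tp x j j := by
        rw [pow_one, tp, ha_def, ContinuousLinearMap.comp_assoc]
      rw [h1]
      exact Submodule.mem_inf.mpr ⟨hI.2.2.1 x hx j hjV j hjV, hJ.2.2.2 x hxV j hjV j hj⟩
    | succ k ih =>
      have hw := Submodule.mem_inf.mp ih
      have hwV : x.comp (a ^ (k + 1)) ∈ V := hI.1 hw.1
      have h1 : x.comp (a ^ (k + 1 + 1)) = tp (x.comp (a ^ (k + 1))) j j := by
        rw [tp, ContinuousLinearMap.comp_assoc, ← ha_def, pow_succ,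
          ContinuousLinearMap.mul_def, ← ContinuousLinearMap.comp_assoc]
      rw [h1]
      exact Submodule.mem_inf.mpr
        ⟨hI.2.2.1 _ hw.1 j hjV j hjV, hJ.2.2.2 _ hwV j hjV j hj⟩
  have hmem : x.comp E ∈ I ⊓ J := by
    have hP0 : P.coeff 0 = 0 := by
      rw [Polynomial.coeff_zero_eq_eval_zero]
      simp [hP_def, hPg_def]
    have hsum : x.comp E = ∑ i ∈ Finset.range (P.natDegree + 1), P.coeff i • x.comp (a ^ i) := by
      rw [hE_def, Polynomial.aeval_eq_sum_range]
      rw [ContinuousLinearMap.comp_finset_sum]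
      exact Finset.sum_congr rfl fun i _ => comp_real_smul x (P.coeff i) (a ^ i)
    rw [hsum]
    apply Submodule.sum_mem
    intro i _
    match i with
    | 0 => simp [hP0]
    | (k + 1) => exact Submodule.smul_of_tower_mem _ (P.coeff (k + 1)) (hpow k)
  refine ⟨x.comp E, hmem, ?_⟩
  have hxw : x - x.comp E = x.comp ((1 : H →L[ℂ] H) - E) := by
    have hx1 : x.comp (1 : H →L[ℂ] H) = x := by
      rw [ContinuousLinearMap.one_def, ContinuousLinearMap.comp_id]
    rw [ContinuousLinearMap.comp_sub, hx1]
  have hsplit : x.comp ((1 : H →L[ℂ] H) - E) = (x - j).comp ((1 : H →L[ℂ] H) - E) + u := by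
    rw [hu_def, ContinuousLinearMap.sub_comp]
    abel
  rw [hxw, hsplit]
  calc ‖(x - j).comp ((1 : H →L[ℂ] H) - E) + u‖
      ≤ ‖(x - j).comp ((1 : H →L[ℂ] H) - E)‖ + ‖u‖ := norm_add_le _ _
    _ ≤ ‖x - j‖ * ‖(1 : H →L[ℂ] H) - E‖ + ε :=
        add_le_add (ContinuousLinearMap.opNorm_comp_le _ _) hnormu
    _ ≤ ‖x - j‖ * 1 + ε :=
        add_le_add (mul_le_mul_of_nonneg_left hnorm1E (norm_nonneg _)) le_rfl
    _ = ‖x - j‖ + ε := by rw [mul_one]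

set_option maxHeartbeats 1600000 in
/-- The sum of two closed ideals of a TRO is closed. -/
private lemma sup_closed {V I J : Submodule ℂ (H →L[ℂ] K)} (hI : IsTROIdeal V I)
    (hJ : IsTROIdeal V J) :
    IsClosed ((I ⊔ J : Submodule ℂ (H →L[ℂ] K)) : Set (H →L[ℂ] K)) := by
  set L := (I ⊔ J).topologicalClosure with hL
  have hLcoe : (L : Set (H →L[ℂ] K)) = closure ((I ⊔ J : Submodule ℂ (H →L[ℂ] K)) : Set _) :=
    Submodule.topologicalClosure_coe _
  have hIL : I ≤ L := le_trans le_sup_left (Submodule.le_topologicalClosure _)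
  have hJL : J ≤ L := le_trans le_sup_right (Submodule.le_topologicalClosure _)
  apply isClosed_of_closure_subset
  intro z hz
  have hzL : z ∈ L := by rw [← SetLike.mem_coe, hLcoe]; exact hz
  have hstep : ∀ r ∈ L, ∀ ε : ℝ, 0 < ε → ∃ p : (H →L[ℂ] K) × (H →L[ℂ] K),
      p.1 ∈ I ∧ p.2 ∈ J ∧ ‖r - p.1 - p.2‖ ≤ ε ∧ ‖p.1‖ ≤ ‖r‖ + ε ∧ ‖p.2‖ ≤ 2 * ‖r‖ + ε := by
    intro r hr ε hε
    have hδ : 0 < ε / 3 := by linarith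
    have hrc : r ∈ closure ((I ⊔ J : Submodule ℂ (H →L[ℂ] K)) : Set _) := by
      rw [← hLcoe]; exact hr
    obtain ⟨v, hv, hdist⟩ := Metric.mem_closure_iff.mp hrc (ε / 3) hδ
    rw [SetLike.mem_coe] at hv
    obtain ⟨x', hx', y', hy', rfl⟩ := Submodule.mem_sup.mp hv
    rw [dist_eq_norm] at hdist
    have hvr : ‖x' + y'‖ ≤ ‖r‖ + ε / 3 := by
      have h2 : ‖x' + y'‖ - ‖r‖ ≤ ‖(x' + y') - r‖ := norm_sub_norm_le _ _
      rw [norm_sub_rev] at h2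
      linarith
    obtain ⟨w, hw, hwn⟩ := exists_approx hI hJ hx' (J.neg_mem hy') hδ
    have hwI := (Submodule.mem_inf.mp hw).1
    have hwJ := (Submodule.mem_inf.mp hw).2
    have hwn' : ‖x' - w‖ ≤ ‖r‖ + 2 * (ε / 3) := by
      have hsc : x' - -y' = x' + y' := by abel
      rw [hsc] at hwn
      linarith
    refine ⟨(x' - w, y' + w), I.sub_mem hx' hwI, J.add_mem hy' hwJ, ?_, ?_, ?_⟩
    · have hre : r - (x' - w) - (y' + w) = r - (x' + y') := by abel
      rw [hre]
      linarith
    · simpa using hwn'.trans (by linarith)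
    · have hre : y' + w = (x' + y') - (x' - w) := by abel
      rw [hre]
      calc ‖(x' + y') - (x' - w)‖ ≤ ‖x' + y'‖ + ‖x' - w‖ := norm_sub_le _ _
        _ ≤ 2 * ‖r‖ + ε := by linarith
  choose! F hF1 hF2 hF3 hF4 hF5 using fun (k : ℕ) r (hr : r ∈ L) =>
    hstep r hr ((1 / 2 : ℝ) ^ (k + 1)) (by positivity)
  let r : ℕ → (H →L[ℂ] K) :=
    fun n => Nat.rec z (fun k rk => rk - (F k rk).1 - (F k rk).2) n
  have hr0 : r 0 = z := rfl
  have hrs : ∀ k, r (k + 1) = r k - (F k (r k)).1 - (F k (r k)).2 := fun k => rfl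
  have hrL : ∀ k, r k ∈ L := by
    intro k
    induction k with
    | zero => exact hzL
    | succ k ih =>
      rw [hrs k]
      exact L.sub_mem (L.sub_mem ih (hIL (hF1 k (r k) ih))) (hJL (hF2 k (r k) ih))
  set x : ℕ → (H →L[ℂ] K) := fun k => (F k (r k)).1 with hx_def
  set y : ℕ → (H →L[ℂ] K) := fun k => (F k (r k)).2 with hy_def
  have hxI : ∀ k, x k ∈ I := fun k => hF1 k (r k) (hrL k)
  have hyJ : ∀ k, y k ∈ J := fun k => hF2 k (r k) (hrL k)
  have hrn : ∀ k, ‖r (k + 1)‖ ≤ (1 / 2 : ℝ) ^ (k + 1) := by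
    intro k
    rw [hrs k]
    exact hF3 k (r k) (hrL k)
  have hhalf : (0 : ℝ) < 1 / 2 := by norm_num
  have hrb : ∀ k, ‖r k‖ ≤ (‖z‖ + 1) * (1 / 2 : ℝ) ^ k := by
    intro k
    cases k with
    | zero =>
      simp only [pow_zero, mul_one, hr0]
      linarith [norm_nonneg z]
    | succ k =>
      have h1 := hrn k
      have h2 : (0 : ℝ) < (1 / 2 : ℝ) ^ (k + 1) := pow_pos hhalf _
      nlinarith [norm_nonneg z]
  have hxb : ∀ k, ‖x k‖ ≤ (‖z‖ + 2) * (1 / 2 : ℝ) ^ k := by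
    intro k
    have h1 := hF4 k (r k) (hrL k)
    have h2 := hrb k
    have h3 : ((1 : ℝ) / 2) ^ (k + 1) ≤ (1 / 2 : ℝ) ^ k := by
      rw [pow_succ]
      nlinarith [pow_pos hhalf k]
    calc ‖x k‖ ≤ (‖z‖ + 1) * (1 / 2 : ℝ) ^ k + (1 / 2 : ℝ) ^ k := by
          have := hF4 k (r k) (hrL k); linarith
      _ = (‖z‖ + 2) * (1 / 2 : ℝ) ^ k := by ring
  have hyb : ∀ k, ‖y k‖ ≤ (2 * ‖z‖ + 3) * (1 / 2 : ℝ) ^ k := by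
    intro k
    have h1 := hF5 k (r k) (hrL k)
    have h2 := hrb k
    have h3 : ((1 : ℝ) / 2) ^ (k + 1) ≤ (1 / 2 : ℝ) ^ k := by
      rw [pow_succ]
      nlinarith [pow_pos hhalf k]
    calc ‖y k‖ ≤ 2 * ((‖z‖ + 1) * (1 / 2 : ℝ) ^ k) + (1 / 2 : ℝ) ^ k := by linarith
      _ ≤ (2 * ‖z‖ + 3) * (1 / 2 : ℝ) ^ k := by nlinarith [pow_pos hhalf k]
  have hgeom : Summable fun k : ℕ => (1 / 2 : ℝ) ^ k :=
    summable_geometric_of_lt_one (by norm_num) (by norm_num)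
  have hsx : Summable x := Summable.of_norm_bounded (hgeom.mul_left (‖z‖ + 2)) hxb
  have hsy : Summable y := Summable.of_norm_bounded (hgeom.mul_left (2 * ‖z‖ + 3)) hyb
  set X := ∑' k, x k with hX_def
  set Y := ∑' k, y k with hY_def
  have hXt := hsx.hasSum.tendsto_sum_nat
  have hYt := hsy.hasSum.tendsto_sum_nat
  have hXI : X ∈ I :=
    hI.2.1.mem_of_tendsto hXt
      (Filter.Eventually.of_forall fun n => Submodule.sum_mem I fun i _ => hxI i)
  have hYJ : Y ∈ J :=
    hJ.2.1.mem_of_tendsto hYt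
      (Filter.Eventually.of_forall fun n => Submodule.sum_mem J fun i _ => hyJ i)
  have hpart : ∀ n, (∑ i ∈ Finset.range n, x i) + (∑ i ∈ Finset.range n, y i) = z - r n := by
    intro n
    induction n with
    | zero => simp [hr0]
    | succ n ih =>
      rw [Finset.sum_range_succ, Finset.sum_range_succ,
        show z - r (n + 1) = (z - r n) + x n + y n by rw [hrs n]; abel, ← ih]
      abel
  have hr_tendsto : Filter.Tendsto r Filter.atTop (nhds 0) := by
    apply squeeze_zero_norm hrb
    have h := tendsto_pow_atTop_nhds_zero_of_lt_one (show (0:ℝ) ≤ 1/2 by norm_num)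
      (show (1:ℝ)/2 < 1 by norm_num)
    simpa using h.const_mul (‖z‖ + 1)
  have hzXY : X + Y = z := by
    have h1 : Filter.Tendsto
        (fun n => (∑ i ∈ Finset.range n, x i) + (∑ i ∈ Finset.range n, y i))
        Filter.atTop (nhds (X + Y)) := hXt.add hYt
    have h2 : Filter.Tendsto (fun n => z - r n) Filter.atTop (nhds z) := by
      simpa using tendsto_const_nhds.sub hr_tendsto
    exact tendsto_nhds_unique (by simpa only [hpart] using h1) h2
  exact SetLike.mem_coe.mpr (Submodule.mem_sup.mpr ⟨X, hXI, Y, hYJ, hzXY⟩)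

private lemma sup_ideal {V I J : Submodule ℂ (H →L[ℂ] K)} (hI : IsTROIdeal V I)
    (hJ : IsTROIdeal V J) : IsTROIdeal V (I ⊔ J) := by
  refine ⟨sup_le hI.1 hJ.1, sup_closed hI hJ, ?_, ?_⟩
  · intro a ha y hy z hz
    obtain ⟨a₁, h₁, a₂, h₂, rfl⟩ := Submodule.mem_sup.mp ha
    rw [tp_add_left]
    exact Submodule.add_mem _ (Submodule.mem_sup_left (hI.2.2.1 _ h₁ y hy z hz))
      (Submodule.mem_sup_right (hJ.2.2.1 _ h₂ y hy z hz))
  · intro xx hxx y hy a ha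
    obtain ⟨a₁, h₁, a₂, h₂, rfl⟩ := Submodule.mem_sup.mp ha
    rw [tp_add_right]
    exact Submodule.add_mem _ (Submodule.mem_sup_left (hI.2.2.2 xx hxx y hy _ h₁))
      (Submodule.mem_sup_right (hJ.2.2.2 xx hxx y hy _ h₂))

private lemma bot_ideal (V : Submodule ℂ (H →L[ℂ] K)) : IsTROIdeal V ⊥ := by
  refine ⟨bot_le, ?_, ?_, ?_⟩
  · rw [Submodule.bot_coe]; exact isClosed_singleton
  · intro a ha y _ z _
    rw [Submodule.mem_bot] at ha
    subst ha
    simp [tp, Submodule.mem_bot]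
  · intro xx _ y _ a ha
    rw [Submodule.mem_bot] at ha
    subst ha
    simp [tp, Submodule.mem_bot]

private lemma fin_iSup_succ {α : Type*} [CompleteLattice α] {n : ℕ} (f : Fin (n + 1) → α) :
    (⨆ i, f i) = (⨆ i : Fin n, f i.castSucc) ⊔ f (Fin.last n) := by
  apply le_antisymm
  · apply iSup_le
    intro i
    induction i using Fin.lastCases with
    | last => exact le_sup_right
    | cast j => exact le_trans (le_iSup (fun i : Fin n => f i.castSucc) j) le_sup_left
  · exact sup_le (iSup_le fun j => le_iSup f j.castSucc) (le_iSup f (Fin.last n))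

private lemma iSup_ideal {V : Submodule ℂ (H →L[ℂ] K)} :
    ∀ (m : ℕ) (f : Fin m → Submodule ℂ (H →L[ℂ] K)), (∀ i, IsTROIdeal V (f i)) →
      IsTROIdeal V (⨆ i, f i) := by
  intro m
  induction m with
  | zero =>
    intro f _
    rw [iSup_of_empty]
    exact bot_ideal V
  | succ m ih =>
    intro f hf
    rw [fin_iSup_succ f]
    exact sup_ideal (ih _ fun i => hf _) (hf (Fin.last m))

private lemma ltenW_mono (V : Submodule ℂ (H →L[ℂ] K)) (W : Submodule ℂ (H₂ →L[ℂ] K₂))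
    (tmul : V →ₗ[ℂ] W →ₗ[ℂ] T) {I₁ I₂ : Submodule ℂ (H →L[ℂ] K)} (h : I₁ ≤ I₂) :
    ltenW V W tmul I₁ ≤ ltenW V W tmul I₂ :=
  Submodule.topologicalClosure_mono (Submodule.span_mono
    (by rintro t ⟨a, b, haI, rfl⟩; exact ⟨a, b, h haI, rfl⟩))

private lemma ltenW_bot (V : Submodule ℂ (H →L[ℂ] K)) (W : Submodule ℂ (H₂ →L[ℂ] K₂))
    (tmul : V →ₗ[ℂ] W →ₗ[ℂ] T) : ltenW V W tmul ⊥ = ⊥ := by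
  apply le_antisymm _ bot_le
  apply Submodule.topologicalClosure_minimal
  · rw [Submodule.span_le]
    rintro t ⟨a, b, haI, rfl⟩
    have ha : a = 0 := by
      have h0 := (Submodule.mem_bot ℂ).mp haI
      exact Subtype.ext h0
    simp [ha]
  · rw [Submodule.bot_coe]; exact isClosed_singleton

end AuxiliaryLemmas

/-- if `I₁, …, I_n` are closed ideals of the TRO `V` whose sum is
closed, then `(I₁ + ⋯ + I_n) ⊗ʰ W = I₁ ⊗ʰ W + ⋯ + I_n ⊗ʰ W` inside
`T = V ⊗ʰ W`.  The hypothesis `hquot` encodes the available fact that for each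
closed ideal `J` of `V`, the quotient map `π : V → V/J` induces a bounded map
`π ⊗ 1 : V ⊗ʰ W → (V/J) ⊗ʰ W` with kernel `J ⊗ʰ W` which maps `I ⊗ʰ W` onto
`((I+J)/J) ⊗ʰ W`, i.e. `(π ⊗ 1)((I ⊔ J) ⊗ʰ W) = (π ⊗ 1)(I ⊗ʰ W)`. -/
theorem statement6 [CompleteSpace T]
    (V : Submodule ℂ (H →L[ℂ] K)) (hV : IsTRO V)
    (W : Submodule ℂ (H₂ →L[ℂ] K₂)) (hW : IsTRO W)
    (tmul : V →ₗ[ℂ] W →ₗ[ℂ] T)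
    (hdense : (Submodule.span ℂ
        {t : T | ∃ a : V, ∃ b : W, t = tmul a b}).topologicalClosure = ⊤)
    (hquot : ∀ J : Submodule ℂ (H →L[ℂ] K), IsTROIdeal V J →
      ∃ (TJ : Type) (_ : NormedAddCommGroup TJ) (_ : NormedSpace ℂ TJ)
        (q : T →L[ℂ] TJ),
        LinearMap.ker (q : T →ₗ[ℂ] TJ) = ltenW V W tmul J ∧
        ∀ I : Submodule ℂ (H →L[ℂ] K), IsTROIdeal V I →
          q '' (ltenW V W tmul (I ⊔ J) : Set T) = q '' (ltenW V W tmul I : Set T) ∧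
          IsClosed (q '' (ltenW V W tmul I : Set T)))
    (n : ℕ) (I : Fin n → Submodule ℂ (H →L[ℂ] K))
    (hI : ∀ i, IsTROIdeal V (I i))
    (hsum : IsClosed ((⨆ i, I i : Submodule ℂ (H →L[ℂ] K)) : Set (H →L[ℂ] K))) :
    ltenW V W tmul (⨆ i, I i) = ⨆ i, ltenW V W tmul (I i) := by
  have key : ∀ S J' : Submodule ℂ (H →L[ℂ] K), IsTROIdeal V S → IsTROIdeal V J' →
      ltenW V W tmul (S ⊔ J') = ltenW V W tmul S ⊔ ltenW V W tmul J' := by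
    intro S J' hS hJ'
    obtain ⟨TJ, iTJ1, iTJ2, q, hker, hcl⟩ := hquot J' hJ'
    refine le_antisymm ?_ (sup_le (ltenW_mono V W tmul le_sup_left)
      (ltenW_mono V W tmul le_sup_right))
    have himg : Submodule.map (q : T →ₗ[ℂ] TJ) (ltenW V W tmul (S ⊔ J')) = Submodule.map (q : T →ₗ[ℂ] TJ) (ltenW V W tmul S) := by
      apply SetLike.coe_injective
      rw [Submodule.map_coe, Submodule.map_coe]
      exact (hcl S hS).1
    calc ltenW V W tmul (S ⊔ J')
        ≤ Submodule.comap (q : T →ₗ[ℂ] TJ) (Submodule.map (q : T →ₗ[ℂ] TJ) (ltenW V W tmul (S ⊔ J'))) :=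
          Submodule.le_comap_map (q : T →ₗ[ℂ] TJ) _
      _ = Submodule.comap (q : T →ₗ[ℂ] TJ) (Submodule.map (q : T →ₗ[ℂ] TJ) (ltenW V W tmul S)) := by rw [himg]
      _ = ltenW V W tmul S ⊔ LinearMap.ker (q : T →ₗ[ℂ] TJ) := Submodule.comap_map_eq (q : T →ₗ[ℂ] TJ) _
      _ = ltenW V W tmul S ⊔ ltenW V W tmul J' := by rw [hker]
  suffices h : ∀ (m : ℕ) (f : Fin m → Submodule ℂ (H →L[ℂ] K)), (∀ i, IsTROIdeal V (f i)) →
      ltenW V W tmul (⨆ i, f i) = ⨆ i, ltenW V W tmul (f i) from h n I hI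
  intro m
  induction m with
  | zero =>
    intro f _
    rw [iSup_of_empty, iSup_of_empty, ltenW_bot]
  | succ m ih =>
    intro f hf
    rw [fin_iSup_succ f, fin_iSup_succ (fun i => ltenW V W tmul (f i)),
      key _ _ (iSup_ideal m _ fun i => hf _) (hf (Fin.last m)),
      ih _ fun i => hf _]
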